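/- Let m > 0 and b = m - 1. If x, y : ℝ → ℝ are differentiable functions satisfying x'(t) = y(t) and y'(t) = -m^2 + (m-1)·y(t) + x(t)^2 + x(t)·y(t) for all t, and if (x,y) is periodic with some period T > 0, then (x,y) is constant. In other words, the Bogdanov–Takens system with b = m - 1 has no nonconstant periodic solutions (hence no limit cycles). -/

import Mathlib

open intervalIntegral MeasureTheory Set

/-- The Bogdanov–Takens system with `b = m - 1` (and `m > 0`) has no nonconstant
periodic solutions: any periodic solution is constant. -/
theorem bt_no_periodic_orbit (m : ℝ) (hm : 0 < m) (x y : ℝ → ℝ)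
    (hx : Differentiable ℝ x) (hy : Differentiable ℝ y)
    (hx' : ∀ t, deriv x t = y t)
    (hy' : ∀ t, deriv y t = -m ^ 2 + (m - 1) * y t + (x t) ^ 2 + x t * y t)
    (T : ℝ) (hT : 0 < T)
    (hper : ∀ t, x (t + T) = x t ∧ y (t + T) = y t) :
    ∀ t, x t = x 0 ∧ y t = y 0 := by
  have hxc : Continuous x := hx.continuous
  have hyc : Continuous y := hy.continuous
  have hxda : ∀ t, HasDerivAt x (y t) t := by
    intro t; have := (hx t).hasDerivAt; rwa [hx' t] at this
  have hyda : ∀ t, HasDerivAt y (-m ^ 2 + (m - 1) * y t + (x t) ^ 2 + x t * y t) t := by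
    intro t; have := (hy t).hasDerivAt; rwa [hy' t] at this
  -- the key auxiliary quantity N = y + x - m, satisfying N' = (x+m) N
  set N : ℝ → ℝ := fun t => y t + x t - m with hNdef
  have hNda : ∀ t, HasDerivAt N ((x t + m) * N t) t := by
    intro t
    have h := ((hyda t).add (hxda t)).sub_const m
    refine h.congr_deriv ?_
    simp only [hNdef]; ring
  -- P = ∫₀ᵗ (x+m)
  have hxm : Continuous fun τ => x τ + m := hxc.add continuous_const
  set P : ℝ → ℝ := fun s => ∫ τ in (0:ℝ)..s, (x τ + m) with hPdef
  have hPda : ∀ s, HasDerivAt P (x s + m) s := fun s =>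
    (hxm.integral_hasStrictDerivAt 0 s).hasDerivAt
  have hP0 : P 0 = 0 := by simp [hPdef]
  -- N t = N 0 * exp (P t)
  have hNP : ∀ t, N t = N 0 * Real.exp (P t) := by
    have hconst : ∀ t, N t * Real.exp (-P t) = N 0 * Real.exp (-P 0) := by
      have hd : ∀ s, HasDerivAt (fun u => N u * Real.exp (-P u)) 0 s := by
        intro s
        have hE : HasDerivAt (fun u => Real.exp (-P u)) (Real.exp (-P s) * -(x s + m)) s :=
          (hPda s).neg.exp
        have := (hNda s).mul hE
        refine this.congr_deriv ?_; ring
      intro t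
      exact is_const_of_deriv_eq_zero (fun s => (hd s).differentiableAt)
        (fun s => (hd s).deriv) t 0
    intro t
    have h := hconst t
    rw [hP0, neg_zero, Real.exp_zero, mul_one] at h
    have := congrArg (fun z => z * Real.exp (P t)) h
    simpa [mul_assoc, ← Real.exp_add] using this
  by_cases h0 : N 0 = 0
  · -- N ≡ 0, so y = m - x and x' = m - x, forcing x ≡ m
    have hN0 : ∀ t, N t = 0 := by intro t; rw [hNP t, h0, zero_mul]
    have hyx : ∀ t, y t = m - x t := by
      intro t; have := hN0 t; simp only [hNdef] at this; linarith
    -- R t = (x t - m) * exp t is constant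
    have hRda : ∀ t, HasDerivAt (fun u => (x u - m) * Real.exp u) 0 t := by
      intro t
      have h1 : HasDerivAt (fun u => x u - m) (y t) t := (hxda t).sub_const m
      have h2 := h1.mul (Real.hasDerivAt_exp t)
      refine h2.congr_deriv ?_
      rw [hyx t]; ring
    have hRconst : ∀ t, (x t - m) * Real.exp t = (x 0 - m) * Real.exp 0 :=
      fun t => is_const_of_deriv_eq_zero (fun s => (hRda s).differentiableAt)
        (fun s => (hRda s).deriv) t 0
    have hxT : x T = x 0 := by have := (hper 0).1; rwa [zero_add] at this
    have hx0 : x 0 = m := by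
      have h1 := hRconst T
      rw [hxT, Real.exp_zero, mul_one] at h1
      have h2 : Real.exp 0 < Real.exp T := Real.exp_lt_exp.mpr hT
      rw [Real.exp_zero] at h2
      have h3 : (x 0 - m) * (Real.exp T - 1) = 0 := by nlinarith [h1]
      rcases mul_eq_zero.mp h3 with h | h
      · linarith [sub_eq_zero.mp h]
      · linarith
    intro t
    have hxt : x t = m := by
      have h1 := hRconst t
      rw [hx0, sub_self, zero_mul] at h1
      rcases mul_eq_zero.mp h1 with h | h
      · linarith [sub_eq_zero.mp h]
      · exact absurd h (Real.exp_ne_zero t)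
    refine ⟨by rw [hxt, hx0], ?_⟩
    rw [hyx t, hyx 0, hxt, hx0]
  · -- N never vanishes; periodicity forces ∫ₛ^{s+T} (x+m) = 0 for every s
    have hPper : ∀ s, P (s + T) = P s := by
      intro s
      have hNper : N (s + T) = N s := by
        simp only [hNdef, (hper s).1, (hper s).2]
      rw [hNP (s + T), hNP s] at hNper
      exact Real.exp_eq_exp.mp (mul_left_cancel₀ h0 hNper)
    have hPint : ∀ s, (∫ τ in s..(s + T), (x τ + m)) = 0 := by
      intro s
      have : P s + (∫ τ in s..(s + T), (x τ + m)) = P (s + T) :=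
        integral_add_adjacent_intervals (hxm.intervalIntegrable 0 s)
          (hxm.intervalIntegrable s (s + T))
      rw [hPper s] at this; linarith
    -- key: ∫ₛ^{s+T} (x+m)² = 0 using the equation of motion
    have hcont1 : Continuous fun τ => deriv y τ - (m - 1) * y τ - x τ * y τ := by
      have heq : (fun τ => deriv y τ - (m - 1) * y τ - x τ * y τ)
          = fun τ => (-m ^ 2 + (m - 1) * y τ + (x τ) ^ 2 + x τ * y τ)
            - (m - 1) * y τ - x τ * y τ := by
        funext τ; rw [hy' τ]
      rw [heq]; fun_prop
    have hGda : ∀ τ, HasDerivAt (fun t => y t - (m - 1) * x t - (x t) ^ 2 / 2)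
        (deriv y τ - (m - 1) * y τ - x τ * y τ) τ := by
      intro τ
      have h1 : HasDerivAt y (deriv y τ) τ := (hy τ).hasDerivAt
      have h3 : HasDerivAt (fun t => (x t) ^ 2) (2 * x τ * y τ) τ := by
        have := (hxda τ).fun_pow 2
        simpa using this
      have h := (h1.sub ((hxda τ).const_mul (m - 1))).sub (h3.div_const 2)
      refine h.congr_deriv ?_; ring
    have key2 : ∀ s, (∫ τ in s..(s + T), (x τ + m) ^ 2) = 0 := by
      intro s
      have hsplit : ∀ τ, (x τ + m) ^ 2
          = (deriv y τ - (m - 1) * y τ - x τ * y τ) + 2 * m * (x τ + m) := by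
        intro τ; rw [hy' τ]; ring
      have hi1 : IntervalIntegrable (fun τ => deriv y τ - (m - 1) * y τ - x τ * y τ)
          volume s (s + T) := hcont1.intervalIntegrable _ _
      have hi2 : IntervalIntegrable (fun τ => 2 * m * (x τ + m)) volume s (s + T) :=
        (continuous_const.mul hxm).intervalIntegrable _ _
      calc (∫ τ in s..(s + T), (x τ + m) ^ 2)
          = ∫ τ in s..(s + T),
            ((deriv y τ - (m - 1) * y τ - x τ * y τ) + 2 * m * (x τ + m)) := by
            apply integral_congr; intro τ _; exact hsplit τ
        _ = (∫ τ in s..(s + T), (deriv y τ - (m - 1) * y τ - x τ * y τ))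
            + ∫ τ in s..(s + T), 2 * m * (x τ + m) := integral_add hi1 hi2
        _ = 0 := by
            have hG := integral_eq_sub_of_hasDerivAt (fun τ _ => hGda τ) hi1
            have h2 : (∫ τ in s..(s + T), 2 * m * (x τ + m))
                = 2 * m * ∫ τ in s..(s + T), (x τ + m) := by
              simp [intervalIntegral.integral_const_mul (2 * m) (fun τ => x τ + m)]
            rw [hG, h2, hPint s]
            simp [(hper s).1, (hper s).2]
    -- Q = ∫₀ᵗ (x+m)² is monotone and T-periodic increments vanish, so (x+m)² ≡ 0
    set Q : ℝ → ℝ := fun s => ∫ τ in (0:ℝ)..s, (x τ + m) ^ 2 with hQdef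
    have hq : Continuous fun τ => (x τ + m) ^ 2 := by fun_prop
    have hQda : ∀ s, HasDerivAt Q ((x s + m) ^ 2) s := fun s =>
      (hq.integral_hasStrictDerivAt 0 s).hasDerivAt
    have hQmono : Monotone Q :=
      monotone_of_deriv_nonneg (fun s => (hQda s).differentiableAt)
        (fun s => by rw [(hQda s).deriv]; positivity)
    have hQper : ∀ s, Q (s + T) = Q s := by
      intro s
      have : Q s + (∫ τ in s..(s + T), (x τ + m) ^ 2) = Q (s + T) :=
        integral_add_adjacent_intervals (hq.intervalIntegrable 0 s)
          (hq.intervalIntegrable s (s + T))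
      rw [key2 s] at this; linarith
    have hxconst : ∀ t, x t = -m := by
      intro t
      have hflat : ∀ r ∈ Ioo (t - T) (t + T), Q r = Q (t - T) := by
        intro r hr
        have hub : Q r ≤ Q (t - T) := by
          have : Q r ≤ Q (t + T) := hQmono (le_of_lt hr.2)
          have he : Q (t + T) = Q (t - T) := by
            have h1 : Q (t - T + T) = Q (t - T) := hQper (t - T)
            have h3 : t - T + T = t := by ring
            rw [h3] at h1
            exact (hQper t).trans h1
          linarith
        have hlb : Q (t - T) ≤ Q r := hQmono (le_of_lt hr.1)
        linarith
      have hnhds : Ioo (t - T) (t + T) ∈ nhds t :=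
        Ioo_mem_nhds (by linarith) (by linarith)
      have hev : Q =ᶠ[nhds t] fun _ => Q (t - T) :=
        Filter.eventuallyEq_of_mem hnhds hflat
      have hd0 : deriv Q t = 0 := by
        rw [hev.deriv_eq]; exact deriv_const t _
      rw [(hQda t).deriv] at hd0
      have := pow_eq_zero_iff (n := 2) (by norm_num) |>.mp hd0
      linarith
    intro t
    have hyzero : ∀ u, y u = 0 := by
      intro u
      have hxf : x = fun _ => -m := funext hxconst
      have := hx' u
      rw [hxf] at this
      simp at this
      exact this.symm
    exact ⟨by rw [hxconst t, hxconst 0], by rw [hyzero t, hyzero 0]⟩
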